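/- For every integer r ≥ 5, the matrix M = [[0, 1], [-1, 1-r]] is in SL(2, ℤ), lies in the ball of radius r (i.e., 0² + 1² + 1² + (1-r)² ≤ r²), and its eigenvector slope λ₁ = (1 - r + √((1-r)² - 4))/2 has continued fraction expansion with period [1, r-3], whose element sum is r - 2. -/

import Mathlib

/-- The sequence of complete quotients of the continued fraction algorithm. -/
noncomputable def cq (x : ℝ) : ℕ → ℝ
  | 0 => x
  | n + 1 => (Int.fract (cq x n))⁻¹

/-- The `n`-th digit of the continued fraction expansion of `x`. -/
noncomputable def cfDigit (x : ℝ) (n : ℕ) : ℤ := ⌊cq x n⌋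

/-- `b` is a period of the (eventually periodic) continued fraction of `x`. -/
def IsCFPeriod (x : ℝ) (b : List ℤ) : Prop :=
  b ≠ [] ∧ ∃ N : ℕ, ∀ i : ℕ, cfDigit x (N + i) = b.getD (i % b.length) 0

/-- `b` is a minimal period of the continued fraction of `x`. -/
def IsMinCFPeriod (x : ℝ) (b : List ℤ) : Prop :=
  IsCFPeriod x b ∧ ∀ c : List ℤ, IsCFPeriod x c → b.length ≤ c.length

/-- For every r ≥ 5, the matrix [[0,1],[-1,1-r]] is in SL(2,ℤ), lies in the ball
of radius r, and its eigenvector slope (1 - r + √((1-r)² - 4))/2 has continued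
fraction period [1, r-3], with element sum r - 2. -/
theorem max_period_sum_matrix (r : ℤ) (hr : 5 ≤ r) :
    (Matrix.of ![![(0 : ℤ), 1], ![-1, 1 - r]]).det = 1 ∧
    (0 : ℤ) ^ 2 + 1 ^ 2 + (-1) ^ 2 + (1 - r) ^ 2 ≤ r ^ 2 ∧
    IsMinCFPeriod (((1 : ℝ) - r + Real.sqrt (((1 : ℝ) - r) ^ 2 - 4)) / 2)
      [1, r - 3] ∧
    ([1, r - 3] : List ℤ).sum = r - 2 := by
  have hrR : (5 : ℝ) ≤ (r : ℝ) := by exact_mod_cast hr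
  set s : ℝ := (r : ℝ) - 1 with hs_def
  have hs : (4 : ℝ) ≤ s := by rw [hs_def]; linarith
  have harg : ((1 : ℝ) - r) ^ 2 - 4 = s ^ 2 - 4 := by rw [hs_def]; ring
  set d : ℝ := Real.sqrt (((1 : ℝ) - r) ^ 2 - 4) with hd_def
  have hd0 : 0 ≤ d := Real.sqrt_nonneg _
  have hd2 : d ^ 2 = s ^ 2 - 4 := by
    rw [hd_def, sq, Real.mul_self_sqrt (by rw [harg]; nlinarith), harg]
  have hdlt : d < s := by nlinarith
  have hdgt : s - 2 < d := by nlinarith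
  set x : ℝ := ((1 : ℝ) - r + d) / 2 with hx_def
  have hx_eq : x = (d - s) / 2 := by rw [hx_def, hs_def]; ring
  set y : ℝ := (d + s - 2) / (2 * s - 4) with hy_def
  set z : ℝ := (d + s - 2) / 2 with hz_def
  have hden : (0 : ℝ) < 2 * s - 4 := by linarith
  -- floor facts
  have hfx : ⌊x⌋ = -1 := by
    rw [Int.floor_eq_iff]
    constructor
    · push_cast; rw [hx_eq]; linarith
    · push_cast; rw [hx_eq]; linarith
  have hfy : ⌊y⌋ = 1 := by
    rw [Int.floor_eq_iff]
    constructor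
    · push_cast
      rw [hy_def, le_div_iff₀ hden]; linarith
    · push_cast
      rw [hy_def, div_lt_iff₀ hden]; linarith
  have hfz : ⌊z⌋ = r - 3 := by
    rw [Int.floor_eq_iff]
    constructor
    · push_cast
      rw [hz_def]
      rw [le_div_iff₀ (by norm_num : (0:ℝ) < 2)]
      rw [hs_def] at hdgt ⊢; linarith
    · push_cast
      rw [hz_def, div_lt_iff₀ (by norm_num : (0:ℝ) < 2)]
      rw [hs_def] at hdlt ⊢; linarith
  -- fract steps
  have hfrx : (Int.fract x)⁻¹ = y := by
    rw [Int.fract, hfx]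
    have h1 : x - ((-1 : ℤ) : ℝ) = (d - s + 2) / 2 := by
      push_cast; rw [hx_eq]; ring
    rw [h1]
    have : y * ((d - s + 2) / 2) = 1 := by
      rw [hy_def]; field_simp [hden.ne', show s * 2 - 4 ≠ 0 by linarith]; nlinarith
    exact (eq_inv_of_mul_eq_one_left this).symm
  have hfry : (Int.fract y)⁻¹ = z := by
    rw [Int.fract, hfy]
    have h1 : y - ((1 : ℤ) : ℝ) = (d - s + 2) / (2 * s - 4) := by
      push_cast; rw [hy_def]; field_simp [hden.ne', show s * 2 - 4 ≠ 0 by linarith]; ring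
    rw [h1]
    have : z * ((d - s + 2) / (2 * s - 4)) = 1 := by
      rw [hz_def]; field_simp [hden.ne', show s * 2 - 4 ≠ 0 by linarith]; nlinarith
    exact (eq_inv_of_mul_eq_one_left this).symm
  have hfrz : (Int.fract z)⁻¹ = y := by
    rw [Int.fract, hfz]
    have h1 : z - ((r - 3 : ℤ) : ℝ) = (d - s + 2) / 2 := by
      push_cast; rw [hz_def, hs_def]; ring
    rw [h1]
    have : y * ((d - s + 2) / 2) = 1 := by
      rw [hy_def]; field_simp [hden.ne', show s * 2 - 4 ≠ 0 by linarith]; nlinarith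
    exact (eq_inv_of_mul_eq_one_left this).symm
  -- complete quotient pattern
  have key : ∀ k : ℕ, cq x (2 * k + 1) = y ∧ cq x (2 * k + 2) = z := by
    intro k
    induction k with
    | zero =>
      constructor
      · show (Int.fract (cq x 0)) ⁻¹ = y
        show (Int.fract x)⁻¹ = y
        exact hfrx
      · show (Int.fract (cq x 1))⁻¹ = z
        have h1 : cq x 1 = y := hfrx
        rw [h1]; exact hfry
    | succ k ih =>
      have h1 : cq x (2 * (k + 1) + 1) = (Int.fract (cq x (2 * k + 2)))⁻¹ := by
        show cq x (2 * k + 2 + 1) = _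
        rfl
      have h2 : cq x (2 * (k + 1) + 1) = y := by rw [h1, ih.2, hfrz]
      refine ⟨h2, ?_⟩
      have h3 : cq x (2 * (k + 1) + 2) = (Int.fract (cq x (2 * (k + 1) + 1)))⁻¹ := rfl
      rw [h3, h2, hfry]
  have hdig : ∀ i : ℕ, cfDigit x (1 + i) = if i % 2 = 0 then 1 else r - 3 := by
    intro i
    rcases Nat.even_or_odd i with ⟨k, hk⟩ | ⟨k, hk⟩
    · have : 1 + i = 2 * k + 1 := by omega
      rw [this]
      unfold cfDigit
      rw [(key k).1, hfy]
      simp [hk]; omega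
    · have : 1 + i = 2 * k + 2 := by omega
      rw [this]
      unfold cfDigit
      rw [(key k).2, hfz]
      simp [hk]
  refine ⟨?_, ?_, ⟨⟨by simp, 1, ?_⟩, ?_⟩, ?_⟩
  · rw [Matrix.det_fin_two_of]; ring
  · nlinarith
  · intro i
    rw [hdig i]
    rcases Nat.even_or_odd i with ⟨k, hk⟩ | ⟨k, hk⟩
    · have h0 : i % 2 = 0 := by omega
      have h1 : i % ([1, r-3] : List ℤ).length = 0 := by simp; omega
      rw [h1]; simp [h0]
    · have h0 : i % 2 = 1 := by omega
      have h1 : i % ([1, r-3] : List ℤ).length = 1 := by simp; omega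
      rw [h1]; simp [h0]
  · rintro c ⟨hne, N, hc⟩
    by_contra hlen
    have hl1 : c.length = 1 := by
      have := List.length_pos_iff.mpr hne
      simp at hlen
      omega
    have ha : ∀ i : ℕ, cfDigit x (N + i) = c.getD 0 0 := by
      intro i
      have := hc i
      rwa [hl1, Nat.mod_one] at this
    have e1 : cfDigit x (1 + 2 * N) = 1 := by rw [hdig]; simp
    have e2 : cfDigit x (1 + (2 * N + 1)) = r - 3 := by
      rw [hdig]; simp [Nat.add_mod]
    have f1 : cfDigit x (N + (N + 1)) = c.getD 0 0 := ha (N + 1)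
    have f2 : cfDigit x (N + (N + 2)) = c.getD 0 0 := ha (N + 2)
    have g1 : N + (N + 1) = 1 + 2 * N := by omega
    have g2 : N + (N + 2) = 1 + (2 * N + 1) := by omega
    rw [g1, e1] at f1
    rw [g2, e2] at f2
    omega
  · simp; ring
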